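/- Let X¹ : Matrix (Fin I) (Fin (J*K)) ℝ, B : Matrix (Fin J) (Fin R) ℝ, C : Matrix (Fin K) (Fin R) ℝ, write M = C⊙B for the Khatri-Rao product, and let λ : ℝ. Define f : Matrix (Fin I) (Fin R) ℝ → ℝ by f A = (1/2) ∑_{i,p} (X¹ i p − (A ⬝ Mᵀ) i p)² + (λ/2) ∑_{i,r} (A i r)². Then for every A, f is Fréchet differentiable at A with derivative, applied to a direction H, equal to ∑_{i,r} (A ⬝ ((Cᵀ⬝C) ∗ (Bᵀ⬝B) + λ • 1) − X¹ ⬝ (C⊙B)) i r * H i r; i.e., the gradient of the regularized objective with respect to A is −X¹(C⊙B) + A((Cᵀ⬝C) ∗ (Bᵀ⬝B) + λI). -/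

import Mathlib

open Matrix

attribute [local instance] Matrix.normedAddCommGroup Matrix.normedSpace

/-- The element `x + a * y` of `Fin (a * b)`, encoding the pair `(x, y)`. -/
def emb {a b : ℕ} (x : Fin a) (y : Fin b) : Fin (a * b) :=
  ⟨x.val + a * y.val, by
    have hx := x.isLt
    have hy := y.isLt
    calc x.val + a * y.val < a + a * y.val := by omega
      _ = a * (y.val + 1) := by ring
      _ ≤ a * b := Nat.mul_le_mul_left a hy⟩

/-- The continuous linear map `H ↦ ∑ i r, G i r * H i r` (Frobenius inner product
against a fixed matrix `G`). -/
noncomputable def frobCLM {I R : ℕ} (G : Matrix (Fin I) (Fin R) ℝ) :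
    Matrix (Fin I) (Fin R) ℝ →L[ℝ] ℝ :=
  LinearMap.toContinuousLinearMap
    { toFun := fun H => ∑ i : Fin I, ∑ r : Fin R, G i r * H i r
      map_add' := fun H1 H2 => by
        simp [Matrix.add_apply, mul_add, Finset.sum_add_distrib]
      map_smul' := fun c H => by
        simp only [Matrix.smul_apply, smul_eq_mul, RingHom.id_apply, Finset.mul_sum]
        exact Finset.sum_congr rfl fun i _ => Finset.sum_congr rfl fun r _ => by ring }

/-- Derivative of squares. -/
theorem my_sq_fderiv {E : Type*} [NormedAddCommGroup E] [NormedSpace ℝ E]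
    {u : E → ℝ} {u' : E →L[ℝ] ℝ} {A : E} (hu : HasFDerivAt u u' A) :
    HasFDerivAt (fun x => u x ^ 2) ((2 * u A) • u') A := by
  have h := hu.mul hu
  simp only [pow_two]
  refine h.congr_fderiv ?_
  rw [two_mul, add_smul]

/-- The CLM `A ↦ (A * Mᵀ) i p`. -/
noncomputable def mulEntryCLM {I R JK : ℕ} (M : Matrix (Fin JK) (Fin R) ℝ)
    (i : Fin I) (p : Fin JK) : Matrix (Fin I) (Fin R) ℝ →L[ℝ] ℝ :=
  LinearMap.toContinuousLinearMap
    { toFun := fun A => (A * Mᵀ) i p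
      map_add' := fun A1 A2 => by simp [Matrix.add_mul]
      map_smul' := fun c A => by simp [Matrix.smul_mul] }

/-- The CLM `A ↦ A i r`. -/
noncomputable def entryCLM {I R : ℕ} (i : Fin I) (r : Fin R) :
    Matrix (Fin I) (Fin R) ℝ →L[ℝ] ℝ :=
  LinearMap.toContinuousLinearMap
    { toFun := fun A => A i r
      map_add' := fun A1 A2 => rfl
      map_smul' := fun c A => rfl }
/-- The gradient of the ridge-regularized objective
`A ↦ (1/2)‖X1 - A * Mᵀ‖² + (λ/2)‖A‖²`, with `M = C ⊙ B` the Khatri-Rao product, is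
`-X1 * (C ⊙ B) + A * ((Cᵀ * C) ∗ (Bᵀ * B) + λ • 1)`: `f` is Fréchet differentiable at
every `A`, with derivative the Frobenius inner product against this gradient matrix. -/
theorem hasFDerivAt_als_ridge_objective {I J K R : ℕ}
    (X1 : Matrix (Fin I) (Fin (J * K)) ℝ)
    (B : Matrix (Fin J) (Fin R) ℝ) (C : Matrix (Fin K) (Fin R) ℝ)
    (M : Matrix (Fin (J * K)) (Fin R) ℝ)
    (hM : ∀ (j : Fin J) (k : Fin K) (r : Fin R), M (emb j k) r = C k r * B j r)
    (lam : ℝ)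
    (f : Matrix (Fin I) (Fin R) ℝ → ℝ)
    (hf : ∀ A, f A = (1 / 2) * ∑ i : Fin I, ∑ p : Fin (J * K), (X1 i p - (A * Mᵀ) i p) ^ 2
        + (lam / 2) * ∑ i : Fin I, ∑ r : Fin R, (A i r) ^ 2)
    (A : Matrix (Fin I) (Fin R) ℝ) :
    HasFDerivAt f
      (frobCLM (A * (Matrix.hadamard (Cᵀ * C) (Bᵀ * B) + lam • (1 : Matrix (Fin R) (Fin R) ℝ))
        - X1 * M)) A := by
  -- bijection between pairs and Fin (J*K)
  have hbij : Function.Bijective (fun q : Fin J × Fin K => emb q.1 q.2) := by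
    rw [Fintype.bijective_iff_injective_and_card]
    constructor
    · rintro ⟨j, k⟩ ⟨j', k'⟩ h
      have hJ : 0 < J := lt_of_le_of_lt (Nat.zero_le _) j.isLt
      have hv : j.val + J * k.val = j'.val + J * k'.val := congrArg Fin.val h
      have h1 : j.val = j'.val := by
        have := congrArg (· % J) hv
        simpa [Nat.add_mul_mod_self_left, Nat.mod_eq_of_lt j.isLt,
          Nat.mod_eq_of_lt j'.isLt] using this
      have h2 : k.val = k'.val := by
        have := congrArg (· / J) hv
        simpa [Nat.add_mul_div_left _ _ hJ, Nat.div_eq_of_lt j.isLt,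
          Nat.div_eq_of_lt j'.isLt] using this
      exact Prod.ext (Fin.ext h1) (Fin.ext h2)
    · simp
  -- M^T M is the hadamard product
  have hMtM : Mᵀ * M = Matrix.hadamard (Cᵀ * C) (Bᵀ * B) := by
    ext r r'
    simp only [Matrix.mul_apply, Matrix.hadamard_apply, Matrix.transpose_apply]
    rw [← Fintype.sum_bijective _ hbij
      (fun q : Fin J × Fin K => M (emb q.1 q.2) r * M (emb q.1 q.2) r') _ (fun q => rfl)]
    rw [Fintype.sum_prod_type]
    simp only [hM]
    rw [Finset.sum_comm, Finset.sum_mul_sum]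
    refine Finset.sum_congr rfl fun k _ => ?_
    refine Finset.sum_congr rfl fun j _ => ?_
    ring
  have hfun : f = fun A => (1 / 2) * ∑ i : Fin I, ∑ p : Fin (J * K),
        (X1 i p - (A * Mᵀ) i p) ^ 2
      + (lam / 2) * ∑ i : Fin I, ∑ r : Fin R, (A i r) ^ 2 := funext hf
  rw [hfun]
  have h1 : HasFDerivAt
      (fun A : Matrix (Fin I) (Fin R) ℝ =>
        (1 / 2 : ℝ) * ∑ i : Fin I, ∑ p : Fin (J * K), (X1 i p - (A * Mᵀ) i p) ^ 2)
      ((1 / 2 : ℝ) • ∑ i : Fin I, ∑ p : Fin (J * K),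
        (2 * (X1 i p - (A * Mᵀ) i p)) • ((0 : _ →L[ℝ] ℝ) - mulEntryCLM M i p)) A := by
    refine HasFDerivAt.const_mul ?_ _
    refine HasFDerivAt.fun_sum fun i _ => HasFDerivAt.fun_sum fun p _ => ?_
    exact my_sq_fderiv ((hasFDerivAt_const _ _).sub (mulEntryCLM M i p).hasFDerivAt)
  have h2 : HasFDerivAt
      (fun A : Matrix (Fin I) (Fin R) ℝ =>
        (lam / 2 : ℝ) * ∑ i : Fin I, ∑ r : Fin R, (A i r) ^ 2)
      ((lam / 2 : ℝ) • ∑ i : Fin I, ∑ r : Fin R,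
        (2 * A i r) • entryCLM i r) A := by
    refine HasFDerivAt.const_mul ?_ _
    refine HasFDerivAt.fun_sum fun i _ => HasFDerivAt.fun_sum fun r _ => ?_
    exact my_sq_fderiv (entryCLM i r).hasFDerivAt
  have hD := h1.add h2
  suffices hG : frobCLM (A * (Matrix.hadamard (Cᵀ * C) (Bᵀ * B)
      + lam • (1 : Matrix (Fin R) (Fin R) ℝ)) - X1 * M) =
      ((1 / 2 : ℝ) • ∑ i : Fin I, ∑ p : Fin (J * K),
        (2 * (X1 i p - (A * Mᵀ) i p)) • ((0 : _ →L[ℝ] ℝ) - mulEntryCLM M i p)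
        : Matrix (Fin I) (Fin R) ℝ →L[ℝ] ℝ) +
      ((lam / 2 : ℝ) • ∑ i : Fin I, ∑ r : Fin R, (2 * A i r) • entryCLM i r
        : Matrix (Fin I) (Fin R) ℝ →L[ℝ] ℝ) by
    rw [hG]
    exact hD
  ext H
  simp only [frobCLM, mulEntryCLM, entryCLM, LinearMap.coe_toContinuousLinearMap',
    LinearMap.coe_mk, AddHom.coe_mk, ContinuousLinearMap.add_apply,
    ContinuousLinearMap.coe_smul', Pi.smul_apply, ContinuousLinearMap.coe_sum',
    Finset.sum_apply, ContinuousLinearMap.sub_apply, ContinuousLinearMap.zero_apply,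
    smul_eq_mul]
  have hGr : A * (Matrix.hadamard (Cᵀ * C) (Bᵀ * B) + lam • (1 : Matrix (Fin R) (Fin R) ℝ))
      - X1 * M = (A * Mᵀ - X1) * M + lam • A := by
    rw [← hMtM, Matrix.mul_add, Matrix.sub_mul, ← Matrix.mul_assoc,
      Matrix.mul_smul, Matrix.mul_one]
    abel
  rw [hGr]
  set U := A * Mᵀ - X1 with hU
  have step1 : ∑ i : Fin I, ∑ r : Fin R, (U * M + lam • A) i r * H i r
      = (∑ i : Fin I, ∑ p : Fin (J * K), U i p * ((H * Mᵀ) i p))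
        + lam * ∑ i : Fin I, ∑ r : Fin R, A i r * H i r := by
    rw [Finset.mul_sum, ← Finset.sum_add_distrib]
    refine Finset.sum_congr rfl fun i _ => ?_
    simp only [Matrix.add_apply, Matrix.smul_apply, smul_eq_mul, add_mul,
      Finset.sum_add_distrib, Finset.mul_sum]
    congr 1
    · simp only [Matrix.mul_apply, Matrix.transpose_apply, Finset.sum_mul]
      rw [Finset.sum_comm]
      refine Finset.sum_congr rfl fun p _ => ?_
      rw [Finset.mul_sum]
      refine Finset.sum_congr rfl fun r _ => by ring
    · exact Finset.sum_congr rfl fun r _ => by ring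
  rw [step1]
  congr 1
  · simp only [Finset.mul_sum]
    refine Finset.sum_congr rfl fun i _ => Finset.sum_congr rfl fun p _ => ?_
    simp only [hU, Matrix.sub_apply]
    ring
  · simp only [Finset.mul_sum]
    refine Finset.sum_congr rfl fun i _ => Finset.sum_congr rfl fun r _ => ?_
    ring_nf
    rfl
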